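/- Let n ≥ 1, R > 0, L > μ > 0, κ = μ/L. Define x* ∈ ℝⁿ by x*₁ = κR and x*ⱼ = -√((1-κ²)/(n-1))·R for j = 2,...,n (when n ≥ 2), and σ* = (L, 0, ..., 0). Then ‖x*‖₂ = R, ‖σ*‖₂ = L, ⟨σ*, x*⟩ = μR, the coordinates of σ* are nonincreasing and nonnegative, and ∑_{i=1}^n x*ᵢ = (κ - √(n-1)·√(1-κ²))·R. -/

import Mathlib

open Finset

lemma aux_sum_if (n : ℕ) (hn : 2 ≤ n) (a b : ℝ) :
    (∑ i : Fin n, (if (i : ℕ) = 0 then a else b)) = a + ((n : ℝ) - 1) * b := by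
  haveI : NeZero n := ⟨by omega⟩
  have hkey : ∀ i : Fin n, (if (i : ℕ) = 0 then a else b)
      = (if i = (0 : Fin (n)) then a - b else 0) + b := by
    intro i
    have : ((i : ℕ) = 0) ↔ i = (0 : Fin n) := by
      constructor
      · intro h; exact Fin.ext (by simpa using h)
      · intro h; simp [h]
    by_cases h : (i : ℕ) = 0
    · simp [h, this.mp h]
    · have h2 : i ≠ (0 : Fin n) := fun hc => h (by simp [hc])
      simp [h, h2]
  simp_rw [hkey]
  rw [Finset.sum_add_distrib, Finset.sum_ite_eq' Finset.univ (0 : Fin n)]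
  simp [Finset.card_univ]
  ring

theorem spectral_descent_lower_bound_tightness
    (n : ℕ) (hn : 2 ≤ n) (R L μ : ℝ) (hR : 0 < R) (hμ : 0 < μ) (hμL : μ < L)
    (κ : ℝ) (hκ : κ = μ / L)
    (x σ : Fin n → ℝ)
    (hx : x = fun i : Fin n => if (i : ℕ) = 0 then κ * R
      else -Real.sqrt ((1 - κ ^ 2) / ((n : ℝ) - 1)) * R)
    (hσ : σ = fun i : Fin n => if (i : ℕ) = 0 then L else 0) :
    Real.sqrt (∑ i, x i ^ 2) = R ∧
    Real.sqrt (∑ i, σ i ^ 2) = L ∧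
    (∑ i, σ i * x i) = μ * R ∧
    (∀ i j : Fin n, i ≤ j → σ j ≤ σ i) ∧
    (∀ i, 0 ≤ σ i) ∧
    (∑ i, x i) = (κ - Real.sqrt ((n : ℝ) - 1) * Real.sqrt (1 - κ ^ 2)) * R := by
  have hL : 0 < L := hμ.trans hμL
  have hκ0 : 0 < κ := hκ ▸ div_pos hμ hL
  have hκ1 : κ < 1 := by rw [hκ]; exact (div_lt_one hL).mpr hμL
  have hκ2 : 0 ≤ 1 - κ ^ 2 := by nlinarith
  have hn1 : (1 : ℝ) ≤ (n : ℝ) - 1 := by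
    have : (2 : ℝ) ≤ (n : ℝ) := by exact_mod_cast hn
    linarith
  have hnpos : (0 : ℝ) < (n : ℝ) - 1 := by linarith
  set s : ℝ := Real.sqrt ((1 - κ ^ 2) / ((n : ℝ) - 1)) with hs
  have hs2 : s ^ 2 = (1 - κ ^ 2) / ((n : ℝ) - 1) :=
    Real.sq_sqrt (div_nonneg hκ2 hnpos.le)
  have hsdiv : s = Real.sqrt (1 - κ ^ 2) / Real.sqrt ((n : ℝ) - 1) := by
    rw [hs, Real.sqrt_div hκ2]
  have hsq : Real.sqrt ((n : ℝ) - 1) * Real.sqrt ((n : ℝ) - 1) = (n : ℝ) - 1 :=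
    Real.mul_self_sqrt hnpos.le
  have hsqpos : 0 < Real.sqrt ((n : ℝ) - 1) := Real.sqrt_pos.mpr hnpos
  refine ⟨?_, ?_, ?_, ?_, ?_, ?_⟩
  · have : (∑ i, x i ^ 2) = R ^ 2 := by
      have h1 : (∑ i, x i ^ 2)
          = ∑ i : Fin n, (if (i : ℕ) = 0 then (κ * R) ^ 2 else (s * R) ^ 2) := by
        apply Finset.sum_congr rfl
        intro i _
        rw [hx]
        by_cases h : (i : ℕ) = 0 <;> simp [h]
      rw [h1, aux_sum_if n hn]
      have : ((n : ℝ) - 1) * s ^ 2 = 1 - κ ^ 2 := by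
        rw [hs2]; field_simp
      nlinarith
    rw [this, Real.sqrt_sq hR.le]
  · have : (∑ i, σ i ^ 2) = L ^ 2 := by
      have h1 : (∑ i, σ i ^ 2)
          = ∑ i : Fin n, (if (i : ℕ) = 0 then L ^ 2 else 0) := by
        apply Finset.sum_congr rfl
        intro i _
        rw [hσ]
        by_cases h : (i : ℕ) = 0 <;> simp [h]
      rw [h1, aux_sum_if n hn]
      ring
    rw [this, Real.sqrt_sq hL.le]
  · have h1 : (∑ i, σ i * x i)
        = ∑ i : Fin n, (if (i : ℕ) = 0 then L * (κ * R) else 0) := by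
      apply Finset.sum_congr rfl
      intro i _
      rw [hσ, hx]
      by_cases h : (i : ℕ) = 0 <;> simp [h]
    rw [h1, aux_sum_if n hn, hκ]
    field_simp
    ring
  · intro i j hij
    rw [hσ]
    by_cases h : (j : ℕ) = 0
    · have : (i : ℕ) = 0 := Nat.le_zero.mp (h ▸ hij)
      simp [h, this]
    · by_cases h2 : (i : ℕ) = 0 <;> simp [h, h2, hL.le]
  · intro i
    rw [hσ]
    by_cases h : (i : ℕ) = 0 <;> simp [h, hL.le]
  · have h1 : (∑ i, x i)
        = ∑ i : Fin n, (if (i : ℕ) = 0 then κ * R else -s * R) := by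
      rw [hx]
    rw [h1, aux_sum_if n hn]
    have hns : ((n : ℝ) - 1) * s = Real.sqrt ((n : ℝ) - 1) * Real.sqrt (1 - κ ^ 2) := by
      rw [hsdiv]
      field_simp
      linear_combination (-Real.sqrt (1 - κ ^ 2)) * hsq
    nlinarith [hns]
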